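/- Let E be a finite-dimensional real inner product space, n ≥ 1, L ≥ 0, M > 0, and λ_R > 0. Let F : E → ℝ be twice continuously differentiable with M-Lipschitz Hessian (‖∇²F(w) − ∇²F(w′)‖_op ≤ M‖w − w′‖ for all w, w′) and with ∇²F(w) ⪰ λ_R·Id for all w ∈ E (i.e., the smallest eigenvalue of every Hessian is at least λ_R). Let f : E → ℝ be differentiable with ‖∇f(w)‖ ≤ L for all w. Let w_R be the minimizer of F (so ∇F(w_R) = 0) and let w_{R'} satisfy ∇G(w_{R'}) = 0 for G(w) = (n·F(w) + f(w))/(n+1). Define the Newton-update point w̄ = w_{R'} + (1/n)·(∇²F(w_{R'}))⁻¹·∇f(w_{R'}). Then ‖w_R − w̄‖ ≤ L²·M / (n²·λ_R³). -/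

import Mathlib

open RealInnerProductSpace

set_option maxHeartbeats 1600000 in
/-- Newton-step unlearning bound: in a finite-dimensional real inner product space, let `F` be
twice continuously differentiable with gradient `F'` and Hessian `Hess` that is `M`-Lipschitz
and satisfies `Hess(w) ⪰ λ_R·Id` everywhere, and let `f` have gradient bounded by `L`. Let
`w_R` be the minimizer of `F` (so `∇F(w_R) = 0`) and `w_{R'}` stationary for
`G(w) = (n·F(w) + f(w))/(n+1)`. Then the Newton-update point
`w̄ = w_{R'} + (1/n)·(Hess(w_{R'}))⁻¹∇f(w_{R'})` (expressed via any solution `v` of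
`Hess(w_{R'}) v = ∇f(w_{R'})`) satisfies `‖w_R − w̄‖ ≤ L²M/(n²λ_R³)`. -/
theorem stmt14 {E : Type*} [NormedAddCommGroup E] [InnerProductSpace ℝ E]
    [FiniteDimensional ℝ E]
    (n : ℕ) (hn : 1 ≤ n) (L M lamR : ℝ) (hL : 0 ≤ L) (hM : 0 < M) (hlamR : 0 < lamR)
    (F f : E → ℝ) (F' f' : E → E) (Hess : E → E →L[ℝ] E)
    (hF : ∀ w, HasFDerivAt F (innerSL ℝ (F' w)) w)
    (hHess : ∀ w, HasFDerivAt F' (Hess w) w)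
    (hHessLip : ∀ w w' : E, ‖Hess w - Hess w'‖ ≤ M * ‖w - w'‖)
    (hpos : ∀ w v : E, lamR * ‖v‖ ^ 2 ≤ ⟪Hess w v, v⟫)
    (hf : ∀ w, HasFDerivAt f (innerSL ℝ (f' w)) w)
    (hfL : ∀ w, ‖f' w‖ ≤ L)
    (wR wR' : E) (hwR : F' wR = 0) (hwRmin : ∀ w, F wR ≤ F w)
    (hwR' : HasFDerivAt (fun w => ((n : ℝ) * F w + f w) / ((n : ℝ) + 1))
      (0 : E →L[ℝ] ℝ) wR')
    (v : E) (hv : Hess wR' v = f' wR') :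
    ‖wR - (wR' + (n : ℝ)⁻¹ • v)‖ ≤ L ^ 2 * M / ((n : ℝ) ^ 2 * lamR ^ 3) := by
  have hn0 : (0:ℝ) < (n:ℝ) := by exact_mod_cast hn
  -- Step 1: stationarity of G gives (n:ℝ) • F' wR' + f' wR' = 0
  have hG : HasFDerivAt (fun w => ((n : ℝ) * F w + f w) / ((n : ℝ) + 1))
      (((n:ℝ)+1)⁻¹ • ((n:ℝ) • innerSL ℝ (F' wR') + innerSL ℝ (f' wR'))) wR' := by
    have h1 : HasFDerivAt (fun w => (n:ℝ) * F w + f w)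
        ((n:ℝ) • innerSL ℝ (F' wR') + innerSL ℝ (f' wR')) wR' :=
      (((hF wR').const_mul ((n:ℝ))).add (hf wR'))
    simpa [div_eq_inv_mul, smul_smul] using h1.const_mul ((n:ℝ)+1)⁻¹
  have hDzero : (((n:ℝ)+1)⁻¹ • ((n:ℝ) • innerSL ℝ (F' wR') + innerSL ℝ (f' wR')))
      = (0 : E →L[ℝ] ℝ) := hG.unique hwR'
  have hstat : (n:ℝ) • F' wR' + f' wR' = 0 := by
    have h := congrArg (fun (T : E →L[ℝ] ℝ) => T ((n:ℝ) • F' wR' + f' wR')) hDzero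
    simp only [ContinuousLinearMap.smul_apply, ContinuousLinearMap.add_apply,
      ContinuousLinearMap.zero_apply, innerSL_apply_apply] at h
    have hne : (((n:ℝ)+1)⁻¹ : ℝ) ≠ 0 := by positivity
    have h2 : ⟪(n:ℝ) • F' wR' + f' wR', (n:ℝ) • F' wR' + f' wR'⟫ = 0 := by
      rw [inner_add_left, real_inner_smul_left]
      simp only [smul_eq_mul] at h
      field_simp at h
      linarith [h]
    exact inner_self_eq_zero.mp h2
  have hfF : f' wR' = -((n:ℝ) • F' wR') := by
    rw [eq_neg_iff_add_eq_zero, add_comm]; exact hstat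
  -- Step 2: strong monotonicity of F'
  have hmono : ∀ x y : E, lamR * ‖x - y‖ ^ 2 ≤ ⟪F' x - F' y, x - y⟫ := by
    intro x y
    set c := x - y with hc
    set line : ℝ → E := fun t => y + t • c with hlinedef
    have hline : ∀ t : ℝ, HasDerivAt line c t := by
      intro t
      simpa [hlinedef] using ((hasDerivAt_id t).smul_const c).const_add y
    set φ : ℝ → ℝ := fun t => ⟪c, F' (line t)⟫ - lamR * ‖c‖ ^ 2 * t with hphidef
    have hφ : ∀ t : ℝ, HasDerivAt φ (⟪c, Hess (line t) c⟫ - lamR * ‖c‖ ^ 2) t := by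
      intro t
      have h1 : HasDerivAt (fun t => F' (line t)) (Hess (line t) c) t :=
        (hHess (line t)).comp_hasDerivAt t (hline t)
      have h2 : HasDerivAt (fun t => ⟪c, F' (line t)⟫) ⟪c, Hess (line t) c⟫ t := by
        simpa [Function.comp_def] using ((innerSL ℝ c).hasFDerivAt.comp_hasDerivAt t h1)
      have h3 : HasDerivAt (fun t : ℝ => lamR * ‖c‖ ^ 2 * t) (lamR * ‖c‖ ^ 2) t := by
        simpa using (hasDerivAt_id t).const_mul (lamR * ‖c‖ ^ 2)
      exact h2.sub h3
    have hmonoφ : Monotone φ := by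
      apply monotone_of_deriv_nonneg (fun t => (hφ t).differentiableAt)
      intro t
      rw [(hφ t).deriv]
      have := hpos (line t) c
      rw [real_inner_comm] at this
      linarith
    have h01 := hmonoφ zero_le_one
    have hl0 : line 0 = y := by simp [hlinedef]
    have hl1 : line 1 = x := by simp [hlinedef, hc]
    rw [hphidef] at h01
    simp only [hl0, hl1, mul_zero, mul_one, sub_zero] at h01
    have : ⟪F' x - F' y, c⟫ = ⟪c, F' x⟫ - ⟪c, F' y⟫ := by
      rw [real_inner_comm, inner_sub_right]
    rw [hc] at this ⊢
    linarith [this]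
  set Δ := wR - wR' with hD
  -- lamR * ‖Δ‖ ≤ ‖F' wR'‖
  have hnormFlow : lamR * ‖Δ‖ ≤ ‖F' wR'‖ := by
    rcases eq_or_ne Δ 0 with h0 | h0
    · simp [h0, norm_nonneg]
    · have h1 : ⟪F' wR', wR' - wR⟫ ≤ ‖F' wR'‖ * ‖wR' - wR‖ := real_inner_le_norm _ _
      have h2 := hmono wR' wR
      rw [hwR, sub_zero] at h2
      have h3 : ‖wR' - wR‖ = ‖Δ‖ := by rw [hD, norm_sub_rev]
      rw [h3] at h1 h2
      have h4 : 0 < ‖Δ‖ := norm_pos_iff.mpr h0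
      nlinarith [h1, h2, h4]
  have hF'n : (n:ℝ) * ‖F' wR'‖ = ‖f' wR'‖ := by
    rw [hfF, norm_neg, norm_smul, Real.norm_eq_abs, abs_of_pos hn0]
  have hkey1 : (n:ℝ) * (lamR * ‖Δ‖) ≤ L := by
    calc (n:ℝ) * (lamR * ‖Δ‖) ≤ (n:ℝ) * ‖F' wR'‖ := by
          exact mul_le_mul_of_nonneg_left hnormFlow (le_of_lt hn0)
      _ = ‖f' wR'‖ := hF'n
      _ ≤ L := hfL wR'
  -- Taylor remainder
  set g : E → E := fun w => F' w - Hess wR' w with hg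
  have hgderiv : ∀ w, HasFDerivAt g (Hess w - Hess wR') w :=
    fun w => (hHess w).sub (Hess wR').hasFDerivAt
  have hseg : ∀ w ∈ segment ℝ wR' wR, ‖Hess w - Hess wR'‖ ≤ M * ‖Δ‖ := by
    rintro w ⟨a, b, ha, hb, hab, rfl⟩
    have ha1 : a = 1 - b := by linarith
    have hwΔ : a • wR' + b • wR - wR' = b • Δ := by
      rw [ha1, hD, sub_smul, one_smul, smul_sub]; abel
    have h1 := hHessLip (a • wR' + b • wR) wR'
    rw [hwΔ, norm_smul, Real.norm_eq_abs, abs_of_nonneg hb] at h1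
    have hb1 : b ≤ 1 := by linarith
    have h2 : b * ‖Δ‖ ≤ ‖Δ‖ := by nlinarith [norm_nonneg Δ]
    calc ‖Hess (a • wR' + b • wR) - Hess wR'‖ ≤ M * (b * ‖Δ‖) := h1
      _ ≤ M * ‖Δ‖ := mul_le_mul_of_nonneg_left h2 hM.le
  have hTaylor : ‖g wR - g wR'‖ ≤ M * ‖Δ‖ * ‖wR - wR'‖ :=
    (convex_segment wR' wR).norm_image_sub_le_of_norm_hasFDerivWithin_le
      (fun w _ => (hgderiv w).hasFDerivWithinAt) hseg
      (left_mem_segment ℝ wR' wR) (right_mem_segment ℝ wR' wR)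
  -- identify the Newton residual
  set u : E := wR - (wR' + (n:ℝ)⁻¹ • v) with hu
  have hHu : Hess wR' u = -(g wR - g wR') := by
    have hne : (n:ℝ) ≠ 0 := ne_of_gt hn0
    rw [hu, hg]
    simp only [map_sub, map_add, map_smul, hv, hwR, hfF]
    rw [smul_neg, smul_smul, inv_mul_cancel₀ hne, one_smul]
    abel
  have hHuNorm : ‖Hess wR' u‖ ≤ M * ‖Δ‖ ^ 2 := by
    rw [hHu, norm_neg]
    calc ‖g wR - g wR'‖ ≤ M * ‖Δ‖ * ‖wR - wR'‖ := hTaylor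
      _ = M * ‖Δ‖ ^ 2 := by rw [← hD]; ring
  have hlamu : lamR * ‖u‖ ≤ ‖Hess wR' u‖ := by
    rcases eq_or_ne u 0 with h0 | h0
    · simp [h0, norm_nonneg]
    · have h1 : ⟪Hess wR' u, u⟫ ≤ ‖Hess wR' u‖ * ‖u‖ := real_inner_le_norm _ _
      have h2 := hpos wR' u
      have h4 : 0 < ‖u‖ := norm_pos_iff.mpr h0
      nlinarith [h1, h2, h4]
  have hfinal : lamR * ‖u‖ ≤ M * ‖Δ‖ ^ 2 := le_trans hlamu hHuNorm
  rw [le_div_iff₀ (by positivity)]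
  have hA : (n:ℝ)^2 * lamR^2 * (lamR * ‖u‖) ≤ (n:ℝ)^2 * lamR^2 * (M * ‖Δ‖^2) :=
    mul_le_mul_of_nonneg_left hfinal (by positivity)
  have hB : ((n:ℝ) * (lamR * ‖Δ‖))^2 ≤ L^2 := pow_le_pow_left₀ (by positivity) hkey1 2
  have hC : M * ((n:ℝ) * (lamR * ‖Δ‖))^2 ≤ M * L^2 := mul_le_mul_of_nonneg_left hB hM.le
  nlinarith [hA, hC]
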